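/- Let η be a real number with 0 < η < 1 and let θ be a real number with e^{iθ} ≠ −1. Then (1/2)( |H₀(θ)|² + |H_G(θ)|² ) = (1/√η − √η)² / (4 cos²(θ/2)) + 1/2, where H₀(θ) = (√η + e^{iθ}/√η)/(1 + e^{iθ}) and H_G(θ) = (1/√η − √η)/(1 + e^{iθ}). -/

import Mathlib

/-- Output quadrature spectrum of a feedback oscillator at gain–loss balance with
vacuum inputs: `(1/2)(|H₀(θ)|² + |H_G(θ)|²) = (1/√η − √η)²/(4cos²(θ/2)) + 1/2`. -/
theorem stmt_5 (η θ : ℝ) (hη0 : 0 < η) (hη1 : η < 1)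
    (hθ : Complex.exp (θ * Complex.I) ≠ -1) :
    (1 / 2) * (‖(((Real.sqrt η : ℂ)
          + Complex.exp (θ * Complex.I) / (Real.sqrt η : ℂ))
          / (1 + Complex.exp (θ * Complex.I)))‖ ^ 2
        + ‖(((1 / Real.sqrt η - Real.sqrt η : ℝ) : ℂ)
          / (1 + Complex.exp (θ * Complex.I)))‖ ^ 2)
      = (1 / Real.sqrt η - Real.sqrt η) ^ 2 / (4 * Real.cos (θ / 2) ^ 2) + 1 / 2 := by
  have hs0 : 0 < Real.sqrt η := Real.sqrt_pos.mpr hη0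
  set s := Real.sqrt η with hsdef
  set c := Real.cos θ with hcdef
  set n := Real.sin θ with hndef
  set d := Real.cos (θ / 2) with hddef
  have hd2 : d ^ 2 = 1 / 2 + c / 2 := by
    rw [hddef, Real.cos_sq, show 2 * (θ / 2) = θ by ring, hcdef]
  have hn2 : n ^ 2 + c ^ 2 = 1 := by
    rw [hndef, hcdef]; exact Real.sin_sq_add_cos_sq θ
  have he : Complex.exp (θ * Complex.I) = (c : ℂ) + (n : ℂ) * Complex.I := by
    rw [Complex.exp_mul_I, hcdef, hndef, Complex.ofReal_cos, Complex.ofReal_sin]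
  have hd : d ≠ 0 := by
    intro h
    apply hθ
    have hc : c = -1 := by nlinarith [hd2]
    have hn : n = 0 := by
      have := Real.sin_two_mul (θ / 2)
      rw [hndef]
      have h2 : 2 * (θ / 2) = θ := by ring
      rw [h2] at this
      rw [this, ← hddef, h]
      ring
    rw [he, hc, hn]
    simp
  have hnum : ((s : ℂ) + Complex.exp (θ * Complex.I) / (s : ℂ))
      = ((s + c / s : ℝ) : ℂ) + ((n / s : ℝ) : ℂ) * Complex.I := by
    rw [he]; push_cast; ring
  have hden : (1 + Complex.exp (θ * Complex.I))
      = ((1 + c : ℝ) : ℂ) + ((n : ℝ) : ℂ) * Complex.I := by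
    rw [he]; push_cast; ring
  have hnum2 : ((1 / s - s : ℝ) : ℂ)
      = ((1 / s - s : ℝ) : ℂ) + ((0 : ℝ) : ℂ) * Complex.I := by
    push_cast; ring
  have hDne : (1 + c) ^ 2 + n ^ 2 ≠ 0 := by
    have : (1 + c) ^ 2 + n ^ 2 = 4 * d ^ 2 := by nlinarith [hd2, hn2]
    rw [this]
    positivity
  rw [hnum, hden]
  conv_lhs => rw [hnum2]
  rw [Complex.sq_norm, Complex.sq_norm, map_div₀, map_div₀,
    Complex.normSq_add_mul_I, Complex.normSq_add_mul_I, Complex.normSq_add_mul_I]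
  have hs' : s ^ 2 = η := Real.sq_sqrt hη0.le
  have hn2' : n ^ 2 = 1 - c ^ 2 := by linarith
  field_simp
  rw [hn2', hd2]
  ring
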